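/- Let a, b ∈ ℝ. Define g₂ = b⁶/3 − 6ab⁴ + (135/4)a²b² − 54a³ and g₃ = −b⁹/27 + ab⁷ − (81/8)a²b⁵ + (369/8)a³b³ − 81a⁴b. Suppose J : ℝ → ℝ is a differentiable function satisfying, for all t, (J'(t))² = 2·J(t)·(a + b·J(t) + 2·J(t)²)·(b²/4 − 2a − b·J(t) − 3·J(t)²). Define ψ̂(t) = −27·J(t)³ − (27b/2)·J(t)² − (27a/2)·J(t) + b³/6 − 3ab/2. Then for all t: (ψ̂'(t))² = 4·ψ̂(t)³ − g₂·ψ̂(t) − g₃. Moreover the discriminant identity g₂³ − 27·g₃² = (729/64)·a⁴·(b²−8a)²·(b²−6a)³ holds. -/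

import Mathlib

/-- explicit reduction of the genus-2 hyperelliptic equation
`J'² = 2J(a+bJ+2J²)(b²/4−2a−bJ−3J²)` to the Weierstrass equation
`ψ̂'² = 4ψ̂³ − g₂ψ̂ − g₃`, together with the discriminant identity
`g₂³ − 27g₃² = (729/64)a⁴(b²−8a)²(b²−6a)³`. -/
theorem stmt_12 (a b g₂ g₃ : ℝ)
    (hg₂ : g₂ = b ^ 6 / 3 - 6 * a * b ^ 4 + (135 / 4) * a ^ 2 * b ^ 2 - 54 * a ^ 3)
    (hg₃ : g₃ = -b ^ 9 / 27 + a * b ^ 7 - (81 / 8) * a ^ 2 * b ^ 5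
      + (369 / 8) * a ^ 3 * b ^ 3 - 81 * a ^ 4 * b)
    (J : ℝ → ℝ) (hJ : Differentiable ℝ J)
    (hode : ∀ t : ℝ, (deriv J t) ^ 2 =
      2 * J t * (a + b * J t + 2 * J t ^ 2) * (b ^ 2 / 4 - 2 * a - b * J t - 3 * J t ^ 2))
    (ψ : ℝ → ℝ)
    (hψ : ∀ t : ℝ, ψ t = -27 * J t ^ 3 - (27 * b / 2) * J t ^ 2 - (27 * a / 2) * J t
      + b ^ 3 / 6 - 3 * a * b / 2) :
    (∀ t : ℝ, (deriv ψ t) ^ 2 = 4 * ψ t ^ 3 - g₂ * ψ t - g₃) ∧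
    g₂ ^ 3 - 27 * g₃ ^ 2 = (729 / 64) * a ^ 4 * (b ^ 2 - 8 * a) ^ 2 * (b ^ 2 - 6 * a) ^ 3 := by
  constructor
  · intro t
    have hJt : HasDerivAt J (deriv J t) t := (hJ t).hasDerivAt
    have hψfun : ψ = fun s => -27 * J s ^ 3 - (27 * b / 2) * J s ^ 2 - (27 * a / 2) * J s
        + b ^ 3 / 6 - 3 * a * b / 2 := funext hψ
    have hψd : HasDerivAt ψ
        ((-81 * J t ^ 2 - 27 * b * J t - 27 * a / 2) * deriv J t) t := by
      rw [hψfun]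
      have h3 : HasDerivAt (fun s => J s ^ 3) (3 * J t ^ 2 * deriv J t) t := by
        simpa using hJt.fun_pow 3
      have h2 : HasDerivAt (fun s => J s ^ 2) (2 * J t ^ 1 * deriv J t) t := hJt.fun_pow 2
      have := ((((h3.const_mul (-27 : ℝ)).fun_sub (h2.const_mul (27 * b / 2))).fun_sub
        (hJt.const_mul (27 * a / 2))).add_const (b ^ 3 / 6)).sub_const (3 * a * b / 2)
      refine this.congr_deriv ?_
      ring
    rw [hψd.deriv, hψ t, hg₂, hg₃]
    linear_combination (-81 * J t ^ 2 - 27 * b * J t - 27 * a / 2) ^ 2 * hode t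
  · rw [hg₂, hg₃]; ring
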